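/- arXiv:2006.16128 — 6 statements merged into one kernel-verified Lean document; each statement's English description precedes it below -/
import Mathlib

section
/- Let φ: ℝ^d → ℝ^n, f: ℝ^d × ℝ^l → ℝ^d, and let P, L_1,…,L_τ ∈ ℝ^{l×n} and T_1,…,T_{τ−1} ∈ ℝ^{l×l} be matrices. For x_0 ∈ ℝ^d and controls u_0,…,u_{i−1} ∈ ℝ^l define x_j = f(x_{j−1}, u_{j−1}) for j = 1,…,i. Suppose that for every i ∈ {1,…,τ}, every x_0 ∈ ℝ^d, and all controls u_0,…,u_{i−1}, it holds that P φ(x_i) = L_i φ(x_0) + Σ_{k=1}^{i−1} T_k u_{i−1−k} + u_{i−1}. Let V = col(Pᵀ) + col(L_1ᵀ) + ⋯ + col(L_{τ−1}ᵀ) ⊆ ℝ^n, assume col(L_τᵀ) ⊆ V, and let Q ∈ ℝ^{n×n} be the orthogonal projection onto V. Then there exist matrices A ∈ ℝ^{n×n} and B ∈ ℝ^{n×l} such that for every x ∈ ℝ^d and u ∈ ℝ^l, Q φ(f(x,u)) = A Q φ(x) + B u. -/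
open MeasureTheory ProbabilityTheory Matrix Finset

noncomputable section

private lemma exists_factor {M N R : Type*} [AddCommGroup M] [AddCommGroup N] [AddCommGroup R]
    [Module ℝ M] [Module ℝ N] [Module ℝ R]
    (C : M →ₗ[ℝ] N) (q : M →ₗ[ℝ] R) (h : LinearMap.ker C ≤ LinearMap.ker q) :
    ∃ N' : N →ₗ[ℝ] R, ∀ w, N' (C w) = q w := by
  obtain ⟨g, hg⟩ := LinearMap.exists_extend
    ((LinearMap.ker C).liftQ q h ∘ₗ C.quotKerEquivRange.symm.toLinearMap)
  refine ⟨g, fun w => ?_⟩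
  have h1 : C w ∈ LinearMap.range C := ⟨w, rfl⟩
  have h2 := LinearMap.congr_fun hg ⟨C w, h1⟩
  simp only [LinearMap.comp_apply, Submodule.subtype_apply] at h2
  simp only [LinearEquiv.coe_coe] at h2
  rw [h2, C.quotKerEquivRange_symm_apply_image w h1]
  simp


/-- Nonlinear state representation: if the inverse model built on a representation `φ` is exact
(zero loss) for all horizons `i = 1,…,τ`, the subspace
`V = col(Pᵀ) + col(L₁ᵀ) + ⋯ + col(L_{τ−1}ᵀ)` contains `col(L_τᵀ)`, and `Q` is the orthogonal
projection onto `V`, then there exist `A`, `B` such that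
`Q φ(f(x,u)) = A Q φ(x) + B u` for all `x`, `u`. -/
theorem stmt_2 (d n l τ : ℕ) (hτ : 1 ≤ τ)
    (φ : (Fin d → ℝ) → (Fin n → ℝ))
    (f : (Fin d → ℝ) → (Fin l → ℝ) → (Fin d → ℝ))
    (P : Matrix (Fin l) (Fin n) ℝ)
    (L : ℕ → Matrix (Fin l) (Fin n) ℝ)
    (T : ℕ → Matrix (Fin l) (Fin l) ℝ)
    -- traj x u j is the state after j steps of f starting from x along controls u
    (traj : (Fin d → ℝ) → (ℕ → Fin l → ℝ) → ℕ → (Fin d → ℝ))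
    (htraj0 : ∀ x u, traj x u 0 = x)
    (htrajS : ∀ x u j, traj x u (j + 1) = f (traj x u j) (u j))
    -- exact inverse model for every horizon i = 1,…,τ, every initial state and all controls
    (hzero : ∀ i ∈ Finset.Icc 1 τ, ∀ (x0 : Fin d → ℝ) (u : ℕ → Fin l → ℝ),
      P.mulVec (φ (traj x0 u i)) =
        (L i).mulVec (φ x0) + (∑ k ∈ Finset.Icc 1 (i - 1), (T k).mulVec (u (i - 1 - k)))
          + u (i - 1))
    -- V = col(Pᵀ) + col(L₁ᵀ) + ⋯ + col(L_{τ−1}ᵀ)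
    (V : Submodule ℝ (Fin n → ℝ))
    (hV : V = LinearMap.range Pᵀ.mulVecLin ⊔
      ⨆ i ∈ Finset.Icc 1 (τ - 1), LinearMap.range (L i)ᵀ.mulVecLin)
    (hLτ : LinearMap.range (L τ)ᵀ.mulVecLin ≤ V)
    -- Q is the orthogonal projection onto V
    (Q : Matrix (Fin n) (Fin n) ℝ)
    (hQ1 : ∀ v ∈ V, Q.mulVec v = v)
    (hQ2 : ∀ w : Fin n → ℝ, (∀ v ∈ V, w ⬝ᵥ v = 0) → Q.mulVec w = 0) :
    ∃ (A : Matrix (Fin n) (Fin n) ℝ) (B : Matrix (Fin n) (Fin l) ℝ),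
      ∀ (x : Fin d → ℝ) (u : Fin l → ℝ),
        Q.mulVec (φ (f x u)) = A.mulVec (Q.mulVec (φ x)) + B.mulVec u := by
  -- shift lemma for trajectories
  have hshift : ∀ (x : Fin d → ℝ) (u : ℕ → Fin l → ℝ) (j : ℕ),
      traj x u (j + 1) = traj (f x (u 0)) (fun k => u (k + 1)) j := by
    intro x u j
    induction j with
    | zero => simp [htraj0, htrajS]
    | succ j ih => rw [htrajS, ih, htrajS]
  -- one-step identity for P
  have h1 : ∀ (x : Fin d → ℝ) (u : Fin l → ℝ),
      P.mulVec (φ (f x u)) = (L 1).mulVec (φ x) + u := by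
    intro x u
    have h := hzero 1 (Finset.mem_Icc.2 ⟨le_refl 1, hτ⟩) x (fun _ => u)
    have ht : traj x (fun _ => u) 1 = f x u := by rw [htrajS, htraj0]
    simpa [ht] using h
  -- one-step identity for L i, 1 ≤ i ≤ τ - 1
  have h2 : ∀ i : ℕ, 1 ≤ i → i ≤ τ - 1 → ∀ (x : Fin d → ℝ) (u : Fin l → ℝ),
      (L i).mulVec (φ (f x u)) = (L (i + 1)).mulVec (φ x) + (T i).mulVec u := by
    intro i hi1 hi2 x u
    have hiτ : i + 1 ≤ τ := by omega
    set uc : ℕ → Fin l → ℝ := fun j => if j = 0 then u else 0 with huc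
    have ha := hzero (i + 1) (Finset.mem_Icc.2 ⟨by omega, hiτ⟩) x uc
    have hb := hzero i (Finset.mem_Icc.2 ⟨hi1, by omega⟩) (f x u) (fun _ => (0 : Fin l → ℝ))
    have hne : i ≠ 0 := by omega
    have ht : traj x uc (i + 1) = traj (f x u) (fun _ => (0 : Fin l → ℝ)) i := by
      have h0 : uc 0 = u := by simp [huc]
      have hs : (fun k => uc (k + 1)) = fun _ => (0 : Fin l → ℝ) := by
        funext k; simp [huc]
      rw [hshift, h0, hs]
    rw [ht] at ha
    have hsum : (∑ k ∈ Finset.Icc 1 (i + 1 - 1), (T k).mulVec (uc (i + 1 - 1 - k)))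
        = (T i).mulVec u := by
      rw [show i + 1 - 1 = i from rfl]
      rw [Finset.sum_eq_single i]
      · simp [huc]
      · intro k hk hki
        have : i - k ≠ 0 := by
          simp only [Finset.mem_Icc] at hk; omega
        simp [huc, this]
      · intro h; exact absurd (Finset.mem_Icc.2 ⟨hi1, le_refl i⟩) h
    have hlast : uc (i + 1 - 1) = 0 := by simp [huc, hne]
    rw [hsum, hlast] at ha
    simp only [Matrix.mulVec_zero, add_zero, Finset.sum_const_zero] at ha hb
    rw [← hb]
    exact ha
  -- w - Q w is orthogonal to V
  have hperp : ∀ w : Fin n → ℝ, ∀ v ∈ V, (w - Q.mulVec w) ⬝ᵥ v = 0 := by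
    intro w v hv
    set e : EuclideanSpace ℝ (Fin n) ≃ₗ[ℝ] (Fin n → ℝ) :=
      WithLp.linearEquiv 2 ℝ (Fin n → ℝ) with he
    set V' : Submodule ℝ (EuclideanSpace ℝ (Fin n)) := V.comap e.toLinearMap with hV'
    obtain ⟨p, hp, q, hq, hpq⟩ := V'.exists_add_mem_mem_orthogonal (e.symm w)
    have hw : w = e p + e q := by
      rw [← map_add, ← hpq, LinearEquiv.apply_symm_apply]
    have hep : e p ∈ V := hp
    have heq0 : ∀ v' ∈ V, (e q) ⬝ᵥ v' = 0 := by
      intro v' hv'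
      have hmem : e.symm v' ∈ V' := by
        simp only [hV', Submodule.mem_comap, LinearEquiv.coe_coe,
          LinearEquiv.apply_symm_apply]
        exact hv'
      have h0 : (inner ℝ (e.symm v') q : ℝ) = 0 := hq (e.symm v') hmem
      rw [PiLp.inner_apply] at h0
      simp only [RCLike.inner_apply, starRingEnd_apply, star_trivial] at h0
      rw [dotProduct]
      rw [← h0]
      apply Finset.sum_congr rfl
      intro i _
      have h1' : (e.symm v') i = v' i := rfl
      have h2' : (e q) i = q i := rfl
      rw [h1', h2', mul_comm]
    have hQw : Q.mulVec w = e p := by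
      rw [hw, Matrix.mulVec_add, hQ1 _ hep, hQ2 _ heq0, add_zero]
    have hsub : w - Q.mulVec w = e q := by rw [hQw, hw]; abel
    rw [hsub]
    exact heq0 v hv
  -- ranges of (L i)ᵀ lie in V for 1 ≤ i ≤ τ
  have hrange : ∀ i : ℕ, 1 ≤ i → i ≤ τ → LinearMap.range (L i)ᵀ.mulVecLin ≤ V := by
    intro i hi1 hi2
    rcases eq_or_lt_of_le hi2 with h | h
    · rw [h]; exact hLτ
    · rw [hV]
      refine le_trans ?_ le_sup_right
      exact le_iSup₂ (f := fun i _ => LinearMap.range (L i)ᵀ.mulVecLin) i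
        (Finset.mem_Icc.2 ⟨hi1, by omega⟩)
  -- L i absorbs Q
  have hLQ : ∀ i : ℕ, 1 ≤ i → i ≤ τ → ∀ w : Fin n → ℝ,
      (L i).mulVec (Q.mulVec w) = (L i).mulVec w := by
    intro i hi1 hi2 w
    have hz : (L i).mulVec (w - Q.mulVec w) = 0 := by
      funext j
      have hvmem : (L i)ᵀ.mulVec (Pi.single j 1) ∈ V :=
        hrange i hi1 hi2 ⟨Pi.single j 1, rfl⟩
      have h0 := hperp w _ hvmem
      rw [Matrix.dotProduct_mulVec, Matrix.vecMul_transpose, dotProduct_single,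
        mul_one] at h0
      exact h0
    have hsub : (L i).mulVec w - (L i).mulVec (Q.mulVec w) = 0 := by
      rw [← Matrix.mulVec_sub]; exact hz
    have := sub_eq_zero.mp hsub
    exact this.symm
  -- the stacked map
  set Clin : (Fin n → ℝ) →ₗ[ℝ] (Fin τ → Fin l → ℝ) :=
    LinearMap.pi (fun i => if (i : ℕ) = 0 then P.mulVecLin else (L (i : ℕ)).mulVecLin)
    with hClin
  have hker : LinearMap.ker Clin ≤ LinearMap.ker Q.mulVecLin := by
    intro w hw
    simp only [LinearMap.mem_ker] at hw ⊢
    have hcomp : ∀ i : Fin τ,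
        (if (i : ℕ) = 0 then P.mulVecLin else (L (i : ℕ)).mulVecLin) w = 0 := by
      intro i
      have := congrFun hw i
      simpa [hClin, LinearMap.pi_apply] using this
    have hP0 : P.mulVec w = 0 := by
      have := hcomp ⟨0, by omega⟩
      simpa using this
    have hL0 : ∀ i : ℕ, 1 ≤ i → i ≤ τ - 1 → (L i).mulVec w = 0 := by
      intro i hi1 hi2
      have hlt : i < τ := by omega
      have := hcomp ⟨i, hlt⟩
      have hne : i ≠ 0 := by omega
      simpa [hne] using this
    have : Q.mulVec w = 0 := by
      apply hQ2
      intro v hv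
      let lm : (Fin n → ℝ) →ₗ[ℝ] ℝ :=
        { toFun := fun v => w ⬝ᵥ v
          map_add' := fun a b => by simp [dotProduct_add]
          map_smul' := fun c a => by simp [dotProduct_smul] }
      suffices hsub : V ≤ LinearMap.ker lm by
        have := hsub hv
        simpa [lm, LinearMap.mem_ker] using this
      rw [hV]
      apply sup_le
      · rintro v' ⟨c, rfl⟩
        simp only [LinearMap.mem_ker, Matrix.mulVecLin_apply]
        show w ⬝ᵥ Pᵀ.mulVec c = 0
        rw [Matrix.dotProduct_mulVec, Matrix.vecMul_transpose, hP0, zero_dotProduct]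
      · apply iSup₂_le
        intro i hi
        rintro v' ⟨c, rfl⟩
        simp only [Finset.mem_Icc] at hi
        simp only [LinearMap.mem_ker, Matrix.mulVecLin_apply]
        show w ⬝ᵥ (L i)ᵀ.mulVec c = 0
        rw [Matrix.dotProduct_mulVec, Matrix.vecMul_transpose, hL0 i hi.1 hi.2,
          zero_dotProduct]
    simpa using this
  obtain ⟨Nl, hNl⟩ := exists_factor Clin Q.mulVecLin hker
  set Dlin : (Fin n → ℝ) →ₗ[ℝ] (Fin τ → Fin l → ℝ) :=
    LinearMap.pi (fun i => (L ((i : ℕ) + 1)).mulVecLin) with hDlin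
  set Elin : (Fin l → ℝ) →ₗ[ℝ] (Fin τ → Fin l → ℝ) :=
    LinearMap.pi (fun i => if (i : ℕ) = 0 then LinearMap.id else (T (i : ℕ)).mulVecLin)
    with hElin
  refine ⟨LinearMap.toMatrix' (Nl ∘ₗ Dlin), LinearMap.toMatrix' (Nl ∘ₗ Elin), fun x u => ?_⟩
  have hmv : ∀ {m k : ℕ} (g : (Fin m → ℝ) →ₗ[ℝ] (Fin k → ℝ)) (v : Fin m → ℝ),
      (LinearMap.toMatrix' g).mulVec v = g v := by
    intro m k g v
    rw [← Matrix.toLin'_apply, Matrix.toLin'_toMatrix']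
  rw [hmv, hmv]
  have hCsplit : Clin (φ (f x u)) = Dlin (φ x) + Elin u := by
    funext i
    simp only [hClin, hDlin, hElin, LinearMap.pi_apply, Pi.add_apply]
    by_cases h0 : (i : ℕ) = 0
    · simp only [h0, if_pos, Matrix.mulVecLin_apply, LinearMap.id_coe, id_eq]
      simpa using h1 x u
    · simp only [if_neg h0, Matrix.mulVecLin_apply]
      have hi1 : 1 ≤ (i : ℕ) := Nat.one_le_iff_ne_zero.2 h0
      have hi2 : (i : ℕ) ≤ τ - 1 := by have := i.isLt; omega
      exact h2 (i : ℕ) hi1 hi2 x u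
  have hDQ : Dlin (Q.mulVec (φ x)) = Dlin (φ x) := by
    funext i
    simp only [hDlin, LinearMap.pi_apply, Matrix.mulVecLin_apply]
    exact hLQ ((i : ℕ) + 1) (by omega) (by have := i.isLt; omega) (φ x)
  calc Q.mulVec (φ (f x u)) = Nl (Clin (φ (f x u))) := by
        rw [hNl]; simp
    _ = Nl (Dlin (φ x)) + Nl (Elin u) := by rw [hCsplit, map_add]
    _ = (Nl ∘ₗ Dlin) (Q.mulVec (φ x)) + (Nl ∘ₗ Elin) u := by
        rw [LinearMap.comp_apply, LinearMap.comp_apply, hDQ]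

end
end

section
/- For any real matrix A, the minimal nonzero singular value of A⁺ + Aᵀ is at least 2; equivalently, ‖(A⁺ + Aᵀ)v‖ ≥ 2‖v‖ for every vector v orthogonal to the kernel of A⁺ + Aᵀ. -/
open MeasureTheory ProbabilityTheory Matrix Finset

noncomputable section

/-- The four Moore–Penrose conditions characterizing the pseudoinverse. -/
def IsMoorePenrose {m n : Type*} [Fintype m] [Fintype n]
    (A : Matrix m n ℝ) (B : Matrix n m ℝ) : Prop :=
  A * B * A = A ∧ B * A * B = B ∧ (A * B)ᵀ = A * B ∧ (B * A)ᵀ = B * A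

/-- Euclidean norm of a finite-dimensional real vector. -/
def eNorm {ι : Type*} [Fintype ι] (v : ι → ℝ) : ℝ := Real.sqrt (v ⬝ᵥ v)

lemma dot_self_nonneg' {ι : Type*} [Fintype ι] (v : ι → ℝ) : 0 ≤ v ⬝ᵥ v :=
  Finset.sum_nonneg fun _ _ => mul_self_nonneg _

/-- For any real matrix `A`, the minimal nonzero singular value of `A⁺ + Aᵀ` is at least 2:
equivalently (and this is the form stated here), `‖(A⁺ + Aᵀ) v‖ ≥ 2 ‖v‖` for every vector `v`
orthogonal to the kernel of `A⁺ + Aᵀ`. -/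
theorem stmt_6 (m n : ℕ) (A : Matrix (Fin m) (Fin n) ℝ)
    (Ap : Matrix (Fin n) (Fin m) ℝ) (hAp : IsMoorePenrose A Ap) :
    ∀ v : Fin m → ℝ,
      (∀ w : Fin m → ℝ, (Ap + Aᵀ).mulVec w = 0 → v ⬝ᵥ w = 0) →
      2 * eNorm v ≤ eNorm ((Ap + Aᵀ).mulVec v) := by
  intro v hv
  obtain ⟨h1, h2, h3, h4⟩ := hAp
  set M := Ap + Aᵀ with hM
  set P := A * Ap with hPdef
  -- P is idempotent
  have hP2 : P * P = P := by
    rw [hPdef, Matrix.mul_assoc, ← Matrix.mul_assoc Ap A Ap, h2]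
  -- M * P = M
  have hAtP : Aᵀ * P = Aᵀ := by
    rw [← h3, ← Matrix.transpose_mul, h1]
  have hApP : Ap * P = Ap := by
    rw [hPdef, ← Matrix.mul_assoc, h2]
  have hMP : M * P = M := by
    rw [hM, Matrix.add_mul, hAtP, hApP]
  -- v is orthogonal to everything killed by M; (I-P)w is killed by M
  have h0 : ∀ w : Fin m → ℝ, M.mulVec (w - P.mulVec w) = 0 := by
    intro w
    rw [Matrix.mulVec_sub, Matrix.mulVec_mulVec, hMP, sub_self]
  -- hence P v = v
  have hPv : P.mulVec v = v := by
    set u := v - P.mulVec v with hu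
    have hvu : v ⬝ᵥ u = 0 := hv u (h0 v)
    have hPu : P.mulVec u = 0 := by
      rw [hu, Matrix.mulVec_sub, Matrix.mulVec_mulVec, hP2, sub_self]
    have hPvu : (P.mulVec v) ⬝ᵥ u = 0 := by
      rw [dotProduct_comm, Matrix.dotProduct_mulVec]
      have hvm : Matrix.vecMul u P = P.mulVec u := by
        rw [← Matrix.mulVec_transpose, h3]
      rw [hvm, hPu, zero_dotProduct]
    have huu : u ⬝ᵥ u = 0 := by
      have h' : u ⬝ᵥ u = v ⬝ᵥ u - (P.mulVec v) ⬝ᵥ u := by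
        rw [hu, sub_dotProduct]
      rw [h', hvu, hPvu, sub_zero]
    have hu0 : u = 0 := dotProduct_self_eq_zero.mp huu
    have := sub_eq_zero.mp (hu ▸ hu0)
    exact this.symm
  -- key inner-product identity
  set x := Ap.mulVec v with hx
  set y := Aᵀ.mulVec v with hy
  have hxy : x ⬝ᵥ y = v ⬝ᵥ v := by
    rw [hy, Matrix.dotProduct_mulVec, Matrix.vecMul_transpose, hx,
      Matrix.mulVec_mulVec]
    rw [← hPdef, hPv]
  -- expand ‖Mv‖²
  have hMv : M.mulVec v = x + y := by
    rw [hM, Matrix.add_mulVec]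
  have hexp : (M.mulVec v) ⬝ᵥ (M.mulVec v)
      = x ⬝ᵥ x + y ⬝ᵥ y + 2 * (x ⬝ᵥ y) := by
    rw [hMv, add_dotProduct, dotProduct_add, dotProduct_add,
      dotProduct_comm y x]
    ring
  have hsq : 0 ≤ (x - y) ⬝ᵥ (x - y) := dot_self_nonneg' _
  have hsq' : 2 * (x ⬝ᵥ y) ≤ x ⬝ᵥ x + y ⬝ᵥ y := by
    have h' : (x - y) ⬝ᵥ (x - y)
        = x ⬝ᵥ x + y ⬝ᵥ y - 2 * (x ⬝ᵥ y) := by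
      rw [sub_dotProduct, dotProduct_sub, dotProduct_sub,
        dotProduct_comm y x]
      ring
    linarith [h' ▸ hsq]
  have hkey : 4 * (v ⬝ᵥ v) ≤ (M.mulVec v) ⬝ᵥ (M.mulVec v) := by
    rw [hexp, hxy]
    linarith [hxy ▸ hsq']
  -- conclude via square roots
  rw [eNorm, eNorm]
  have h4 : (2 : ℝ) * Real.sqrt (v ⬝ᵥ v) = Real.sqrt (4 * (v ⬝ᵥ v)) := by
    rw [Real.sqrt_mul (by norm_num : (0:ℝ) ≤ 4)]
    congr 1
    rw [show (4:ℝ) = 2 ^ 2 by norm_num, Real.sqrt_sq (by norm_num : (0:ℝ) ≤ 2)]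
  rw [h4]
  exact Real.sqrt_le_sqrt hkey
end
end

section
/- Let f: ℝ^n × ℝ^l → ℝ^n, fix i ≥ 2, and let P, L_{i−1}, L_i ∈ ℝ^{l×n} and T_1,…,T_{i−1} ∈ ℝ^{l×l} be matrices. For x ∈ ℝ^n and controls u_0,…,u_{j−1} ∈ ℝ^l, let F_j(x; u_0,…,u_{j−1}) denote the state obtained by iterating f, i.e. F_0 = x and F_{k+1} = f(F_k, u_k). Suppose that for all x and all controls: P F_{i−1}(x; u_0,…,u_{i−2}) = L_{i−1} x + Σ_{k=1}^{i−2} T_k u_{i−2−k} + u_{i−2} and P F_i(x; u_0,…,u_{i−1}) = L_i x + Σ_{k=1}^{i−1} T_k u_{i−1−k} + u_{i−1}. Then for every x ∈ ℝ^n and u ∈ ℝ^l, L_{i−1} f(x, u) = L_i x + T_{i−1} u. -/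
open MeasureTheory ProbabilityTheory Matrix Finset

noncomputable section

/-- If the inverse model is exact at horizons `i−1` and `i` (with coupled matrices `T_k`),
then `L_{i−1} f(x, u) = L_i x + T_{i−1} u` for every state `x` and control `u`. -/
theorem stmt_8 (n l i : ℕ) (hi : 2 ≤ i)
    (f : (Fin n → ℝ) → (Fin l → ℝ) → (Fin n → ℝ))
    (P Lim1 Li : Matrix (Fin l) (Fin n) ℝ)
    (T : ℕ → Matrix (Fin l) (Fin l) ℝ)
    -- F x u j is the j-fold iterate of f starting at x along the control sequence u
    (F : (Fin n → ℝ) → (ℕ → Fin l → ℝ) → ℕ → (Fin n → ℝ))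
    (hF0 : ∀ x u, F x u 0 = x)
    (hFS : ∀ x u k, F x u (k + 1) = f (F x u k) (u k))
    -- the two inverse-model identities, at horizons i−1 and i
    (h1 : ∀ (x : Fin n → ℝ) (u : ℕ → Fin l → ℝ),
      P.mulVec (F x u (i - 1)) =
        Lim1.mulVec x + (∑ k ∈ Finset.Icc 1 (i - 2), (T k).mulVec (u (i - 2 - k))) + u (i - 2))
    (h2 : ∀ (x : Fin n → ℝ) (u : ℕ → Fin l → ℝ),
      P.mulVec (F x u i) =
        Li.mulVec x + (∑ k ∈ Finset.Icc 1 (i - 1), (T k).mulVec (u (i - 1 - k))) + u (i - 1)) :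
    ∀ (x : Fin n → ℝ) (u : Fin l → ℝ),
      Lim1.mulVec (f x u) = Li.mulVec x + (T (i - 1)).mulVec u := by
  intro x u
  -- control sequence: u at time 0, then 0
  set U : ℕ → Fin l → ℝ := fun k => if k = 0 then u else 0 with hU
  -- shift lemma
  have shift : ∀ (j : ℕ) (x : Fin n → ℝ) (v : ℕ → Fin l → ℝ),
      F x v (j + 1) = F (f x (v 0)) (fun k => v (k + 1)) j := by
    intro j
    induction j with
    | zero => intro x v; rw [hFS, hF0, hF0]
    | succ j ih => intro x v; rw [hFS, ih, hFS]
  have hi1 : 1 ≤ i - 1 := by omega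
  have keyF : F x U i = F (f x u) (fun _ => (0 : Fin l → ℝ)) (i - 1) := by
    obtain ⟨j, hj⟩ : ∃ j, i = j + 1 := ⟨i - 1, by omega⟩
    have hj1 : i - 1 = j := by omega
    rw [hj]; simp only [Nat.add_sub_cancel]; rw [shift]
    have hU0 : U 0 = u := by simp [hU]
    have hz : (fun k => U (k + 1)) = fun _ : ℕ => (0 : Fin l → ℝ) := by
      funext k; simp [hU]
    rw [hU0, hz]
  -- h1 at (f x u) with zero controls
  have e1 := h1 (f x u) (fun _ => (0 : Fin l → ℝ))
  simp only [Matrix.mulVec_zero, Finset.sum_const, smul_zero, add_zero] at e1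
  -- h2 at x with U
  have e2 := h2 x U
  rw [keyF] at e2
  rw [e1] at e2
  -- simplify RHS of e2
  have hsum : (∑ k ∈ Finset.Icc 1 (i - 1), (T k).mulVec (U (i - 1 - k)))
      = (T (i - 1)).mulVec u := by
    rw [Finset.sum_eq_single (i - 1)]
    · have : U (i - 1 - (i - 1)) = u := by simp [hU]
      rw [this]
    · intro b hb hne
      have hb' := Finset.mem_Icc.mp hb
      have : U (i - 1 - b) = 0 := by
        have : i - 1 - b ≠ 0 := by omega
        simp [hU, this]
      rw [this, Matrix.mulVec_zero]
    · intro h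
      exact absurd (Finset.mem_Icc.mpr ⟨hi1, le_refl _⟩) h
  have hlast : U (i - 1) = 0 := by
    have : i - 1 ≠ 0 := by omega
    simp [hU, this]
  rw [hsum, hlast, add_zero] at e2
  exact e2
end
end

section
/- Let B ∈ ℝ^{d×l} have rank l, let Σ_{uu} ∈ ℝ^{l×l} be symmetric positive definite, let Σ_{uz} ∈ ℝ^{l×d} with Σ_{zu} := Σ_{uz}ᵀ, let Σ_{zz} ∈ ℝ^{d×d}, let σ ∈ ℝ, and let P_1, P_2 ∈ ℝ^{d×l}. Suppose 0 = B Σ_{uu}(Bᵀ P_1 − I) + B Σ_{uz} P_2 + σ² P_1 and 0 = Σ_{zu}(Bᵀ P_1 − I) + Σ_{zz} P_2 + σ² P_2. Then (σ² I + Σ_{zz} − Σ_{zu} Σ_{uu}^{−1} Σ_{uz}) P_2 = σ² Σ_{zu} (B Σ_{uu})⁺ P_1. -/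
open MeasureTheory ProbabilityTheory Matrix Finset

noncomputable section

lemma isUnit_of_rank_eq_card {n : Type*} [Fintype n] [DecidableEq n]
    (A : Matrix n n ℝ) (h : A.rank = Fintype.card n) : IsUnit A := by
  rw [← Matrix.mulVec_surjective_iff_isUnit]
  have hr : LinearMap.range A.mulVecLin = ⊤ := by
    apply Submodule.eq_top_of_finrank_eq
    rw [← Matrix.rank, h, Module.finrank_fintype_fun_eq_card]
  exact fun v => (LinearMap.range_eq_top.mp hr) v


/-- Combining the two optimality conditions of the noisy inverse-model regression yields
`(σ²I + Σ_zz − Σ_zu Σ_uu⁻¹ Σ_uz) P₂ = σ² Σ_zu (B Σ_uu)⁺ P₁`. -/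
theorem stmt_13 (d l : ℕ)
    (B : Matrix (Fin d) (Fin l) ℝ) (hB : B.rank = l)
    (Suu : Matrix (Fin l) (Fin l) ℝ) (hSuu : Suu.PosDef)
    (Suz : Matrix (Fin l) (Fin d) ℝ) (Szu : Matrix (Fin d) (Fin l) ℝ) (hSzu : Szu = Suzᵀ)
    (Szz : Matrix (Fin d) (Fin d) ℝ) (σ : ℝ)
    (P1 P2 : Matrix (Fin d) (Fin l) ℝ)
    (hopt1 : 0 = B * Suu * (Bᵀ * P1 - 1) + B * Suz * P2 + σ ^ 2 • P1)
    (hopt2 : 0 = Szu * (Bᵀ * P1 - 1) + Szz * P2 + σ ^ 2 • P2)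
    (Mp : Matrix (Fin l) (Fin d) ℝ) (hMp : IsMoorePenrose (B * Suu) Mp) :
    (σ ^ 2 • (1 : Matrix (Fin d) (Fin d) ℝ) + Szz - Szu * Suu⁻¹ * Suz) * P2
      = σ ^ 2 • (Szu * Mp * P1) := by
  set A := B * Suu with hAdef
  have hdetSuu : IsUnit Suu.det := isUnit_iff_ne_zero.mpr (ne_of_gt hSuu.det_pos)
  have hrankA : A.rank = l := by
    rw [hAdef, Matrix.rank_mul_eq_left_of_isUnit_det Suu B hdetSuu, hB]
  have hN : IsUnit (Aᵀ * A) := by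
    apply isUnit_of_rank_eq_card
    rw [Matrix.rank_transpose_mul_self, hrankA, Fintype.card_fin]
  have hNdet : IsUnit (Aᵀ * A).det := (Matrix.isUnit_iff_isUnit_det _).mp hN
  have hMpA : Mp * A = 1 := by
    have h1 : (Aᵀ * A) * (Mp * A) = Aᵀ * A := by
      calc (Aᵀ * A) * (Mp * A) = Aᵀ * (A * Mp * A) := by
            simp only [Matrix.mul_assoc]
        _ = Aᵀ * A := by rw [hMp.1]
    have h2 := congrArg (fun X => (Aᵀ * A)⁻¹ * X) h1
    simp only [Matrix.nonsing_inv_mul_cancel_left _ _ hNdet,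
      Matrix.nonsing_inv_mul _ hNdet] at h2
    exact h2
  have hSuuinv : Suu⁻¹ = Mp * B := by
    apply Matrix.inv_eq_left_inv
    rw [Matrix.mul_assoc]
    exact hMpA
  -- derive expression for S := Bᵀ * P1 - 1
  have hS : Bᵀ * P1 - 1 = -(Suu⁻¹ * (Suz * P2)) - σ ^ 2 • (Mp * P1) := by
    have e1 := congrArg (fun X => Mp * X) hopt1
    simp only [Matrix.mul_zero, Matrix.mul_add, Matrix.mul_smul] at e1
    rw [show Mp * (B * Suu * (Bᵀ * P1 - 1)) = (Bᵀ * P1 - 1) by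
          rw [← Matrix.mul_assoc, hMpA, Matrix.one_mul],
        show Mp * (B * Suz * P2) = Suu⁻¹ * (Suz * P2) by
          rw [hSuuinv]; simp only [Matrix.mul_assoc]] at e1
    linear_combination (norm := skip) -e1
    abel
  rw [hS] at hopt2
  have : Szu * (-(Suu⁻¹ * (Suz * P2)) - σ ^ 2 • (Mp * P1))
      = -(Szu * Suu⁻¹ * Suz * P2) - σ ^ 2 • (Szu * Mp * P1) := by
    rw [Matrix.mul_sub, Matrix.mul_neg, Matrix.mul_smul]
    simp only [Matrix.mul_assoc]
  rw [this] at hopt2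
  have goal' : σ ^ 2 • P2 + Szz * P2 - Szu * Suu⁻¹ * Suz * P2 = σ ^ 2 • (Szu * Mp * P1) := by
    linear_combination (norm := skip) -hopt2
    abel
  calc (σ ^ 2 • (1 : Matrix (Fin d) (Fin d) ℝ) + Szz - Szu * Suu⁻¹ * Suz) * P2
      = σ ^ 2 • P2 + Szz * P2 - Szu * Suu⁻¹ * Suz * P2 := by
        rw [Matrix.sub_mul, Matrix.add_mul, Matrix.smul_mul, Matrix.one_mul]
    _ = σ ^ 2 • (Szu * Mp * P1) := goal'
end
end

section
/- Let S_hh and S_zz be real symmetric matrices, and let S_hz be a real matrix with S_zh := S_hzᵀ, such that S_hh S_hh⁺ S_hz = S_hz and S_zz S_zz⁺ S_zh = S_zh. Let Θ, Ṽ, K, M be real matrices of compatible sizes satisfying 0 = Θ Ṽ S_hh + Θ K S_zh − M S_hh and 0 = Θ K S_zz + Θ Ṽ S_hz − M S_hz. Then Θ K S_zz (I − S_zz⁺ S_zh S_hh⁺ S_hz) = 0. -/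
open MeasureTheory ProbabilityTheory Matrix Finset

noncomputable section

/-- From the two (block) first-order optimality conditions one deduces
`Θ K S_zz (I − S_zz⁺ S_zh S_hh⁺ S_hz) = 0`. -/
theorem stmt_14 {a b h z : Type*} [Fintype a] [Fintype b] [Fintype h] [Fintype z] [DecidableEq h] [DecidableEq z]
    (Shh : Matrix h h ℝ) (hShhSymm : Shh.IsSymm)
    (Szz : Matrix z z ℝ) (hSzzSymm : Szz.IsSymm)
    (Shz : Matrix h z ℝ) (Szh : Matrix z h ℝ) (hSzh : Szh = Shzᵀ)
    (Shhp : Matrix h h ℝ) (hShhp : IsMoorePenrose Shh Shhp)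
    (Szzp : Matrix z z ℝ) (hSzzp : IsMoorePenrose Szz Szzp)
    (hcolhz : Shh * Shhp * Shz = Shz)
    (hcolzh : Szz * Szzp * Szh = Szh)
    (Θ : Matrix a b ℝ) (Vt : Matrix b h ℝ) (K : Matrix b z ℝ) (M : Matrix a h ℝ)
    (hopt1 : 0 = Θ * Vt * Shh + Θ * K * Szh - M * Shh)
    (hopt2 : 0 = Θ * K * Szz + Θ * Vt * Shz - M * Shz) :
    Θ * K * Szz * (1 - Szzp * Szh * Shhp * Shz) = 0 := by
  have e1 : Θ * Vt * Shh + Θ * K * Szh = M * Shh := sub_eq_zero.mp hopt1.symm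
  have e2 : Θ * K * Szz + Θ * Vt * Shz = M * Shz := sub_eq_zero.mp hopt2.symm
  have e3 : Θ * Vt * Shz + Θ * K * Szh * (Shhp * Shz) = M * Shz := by
    calc Θ * Vt * Shz + Θ * K * Szh * (Shhp * Shz)
        = Θ * Vt * (Shh * Shhp * Shz) + Θ * K * Szh * (Shhp * Shz) := by rw [hcolhz]
      _ = (Θ * Vt * Shh + Θ * K * Szh) * (Shhp * Shz) := by
          rw [Matrix.add_mul]; simp only [Matrix.mul_assoc]
      _ = M * Shh * (Shhp * Shz) := by rw [e1]
      _ = M * (Shh * Shhp * Shz) := by simp [Matrix.mul_assoc]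
      _ = M * Shz := by rw [hcolhz]
  have key : Θ * K * Szz = Θ * K * Szh * (Shhp * Shz) := by
    have := e2.trans e3.symm
    rw [add_comm (Θ * Vt * Shz)] at this
    exact add_right_cancel this
  have e4 : Θ * K * Szz * (Szzp * Szh * Shhp * Shz) = Θ * K * Szh * (Shhp * Shz) := by
    calc Θ * K * Szz * (Szzp * Szh * Shhp * Shz)
        = Θ * K * (Szz * Szzp * Szh) * (Shhp * Shz) := by simp [Matrix.mul_assoc]
      _ = Θ * K * Szh * (Shhp * Shz) := by rw [hcolzh]
  rw [Matrix.mul_sub, Matrix.mul_one, e4, key, sub_self]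
end
end

section
/- Let y and z be random vectors with finite second moments, and define Σ_{yy} = E[yyᵀ], Σ_{zz} = E[zzᵀ], Σ_{yz} = E[yzᵀ], Σ_{zy} = Σ_{yz}ᵀ. Then ρ(y,z)² equals the largest eigenvalue of the matrix Σ_{zz}⁺ Σ_{zy} Σ_{yy}⁺ Σ_{yz}. -/
open MeasureTheory ProbabilityTheory Matrix Finset

noncomputable section

/-- Canonical correlation of two finite-dimensional random vectors. -/
def canonCorr {Ω : Type*} [MeasurableSpace Ω] (μ : Measure Ω)
    {ι κ : Type*} [Fintype ι] [Fintype κ]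
    (a : Ω → ι → ℝ) (b : Ω → κ → ℝ) : ℝ :=
  sSup {t : ℝ | ∃ (a' : ι → ℝ) (b' : κ → ℝ),
    0 < (∫ ω, (a ω ⬝ᵥ a') ^ 2 ∂μ) ∧ 0 < (∫ ω, (b ω ⬝ᵥ b') ^ 2 ∂μ) ∧
    t = (∫ ω, (a ω ⬝ᵥ a') * (b ω ⬝ᵥ b') ∂μ) /
        Real.sqrt ((∫ ω, (a ω ⬝ᵥ a') ^ 2 ∂μ) * (∫ ω, (b ω ⬝ᵥ b') ^ 2 ∂μ))}

section Aux

set_option linter.unusedSectionVars false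

lemma mp_unique {m n : Type*} [Fintype m] [Fintype n]
    {A : Matrix m n ℝ} {B C : Matrix n m ℝ}
    (hB : IsMoorePenrose A B) (hC : IsMoorePenrose A C) : B = C := by
  obtain ⟨hB1, hB2, hB3, hB4⟩ := hB
  obtain ⟨hC1, hC2, hC3, hC4⟩ := hC
  have hAB : A * B = A * C := by
    calc A * B = (A * C * A) * B := by rw [hC1]
    _ = (A * C)ᵀ * (A * B)ᵀ := by rw [hC3, hB3, Matrix.mul_assoc]
    _ = (A * B * A * C)ᵀ := by simp [Matrix.transpose_mul, Matrix.mul_assoc]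
    _ = (A * C)ᵀ := by rw [hB1]
    _ = A * C := hC3
  have hBA : B * A = C * A := by
    calc B * A = B * (A * C * A) := by rw [hC1]
    _ = (B * A) * (C * A) := by simp [Matrix.mul_assoc]
    _ = (B * A)ᵀ * (C * A)ᵀ := by rw [hB4, hC4]
    _ = (C * (A * B * A))ᵀ := by simp [Matrix.transpose_mul, Matrix.mul_assoc]
    _ = (C * A)ᵀ := by rw [hB1]
    _ = C * A := hC4
  calc B = B * A * B := hB2.symm
  _ = C * A * C := by rw [hBA, Matrix.mul_assoc, hAB, ← Matrix.mul_assoc]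
  _ = C := hC2

lemma mp_transpose {m n : Type*} [Fintype m] [Fintype n]
    {A : Matrix m n ℝ} {B : Matrix n m ℝ} (h : IsMoorePenrose A B) :
    IsMoorePenrose Aᵀ Bᵀ := by
  obtain ⟨h1, h2, h3, h4⟩ := h
  refine ⟨?_, ?_, ?_, ?_⟩
  · rw [← Matrix.transpose_mul, ← Matrix.transpose_mul, ← Matrix.mul_assoc, h1]
  · rw [← Matrix.transpose_mul, ← Matrix.transpose_mul, ← Matrix.mul_assoc, h2]
  · rw [← Matrix.transpose_mul, Matrix.transpose_transpose, ← h4, Matrix.transpose_transpose]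
    exact h4
  · rw [← Matrix.transpose_mul, Matrix.transpose_transpose, ← h3, Matrix.transpose_transpose]
    exact h3

lemma mp_symm {n : Type*} [Fintype n] {A B : Matrix n n ℝ}
    (hA : Aᵀ = A) (h : IsMoorePenrose A B) : Bᵀ = B :=
  mp_unique (by simpa [hA] using mp_transpose h) h

/-- Move a matrix across the dot product. -/
lemma dot_shift {m n : Type*} [Fintype m] [Fintype n] (M : Matrix m n ℝ) (u : n → ℝ) (w : m → ℝ) :
    (M *ᵥ u) ⬝ᵥ w = u ⬝ᵥ (Mᵀ *ᵥ w) := by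
  rw [Matrix.dotProduct_mulVec, Matrix.vecMul_transpose, dotProduct_comm]

lemma forms_zero {m n : Type*} [Fintype m] [Fintype n]
    (M : Matrix m n ℝ) (h : ∀ u v, u ⬝ᵥ M *ᵥ v = 0) : M = 0 := by
  classical
  ext i j
  have := h (Pi.single i 1) (Pi.single j 1)
  simpa [dotProduct, Matrix.mulVec, Pi.single_apply, Finset.sum_ite_eq,
    Finset.mul_sum] using this


variable {Ω : Type*} [MeasurableSpace Ω] {μ : Measure Ω}

lemma cross_int {ι κ : Type*} [Fintype ι] [Fintype κ]
    {f : Ω → ι → ℝ} {g : Ω → κ → ℝ} (hf : Measurable f) (hg : Measurable g)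
    (hf2 : Integrable (fun ω => f ω ⬝ᵥ f ω) μ) (hg2 : Integrable (fun ω => g ω ⬝ᵥ g ω) μ)
    (i : ι) (j : κ) : Integrable (fun ω => f ω i * g ω j) μ := by
  have hfi : Measurable fun ω => f ω i := (measurable_pi_apply i).comp hf
  have hgj : Measurable fun ω => g ω j := (measurable_pi_apply j).comp hg
  refine Integrable.mono' (hf2.add hg2) ((hfi.mul hgj).aestronglyMeasurable) ?_
  filter_upwards with ω
  have h1 : f ω i * f ω i ≤ f ω ⬝ᵥ f ω :=
    Finset.single_le_sum (f := fun k => f ω k * f ω k)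
      (fun k _ => mul_self_nonneg _) (Finset.mem_univ i)
  have h2 : g ω j * g ω j ≤ g ω ⬝ᵥ g ω :=
    Finset.single_le_sum (f := fun k => g ω k * g ω k)
      (fun k _ => mul_self_nonneg _) (Finset.mem_univ j)
  have h3 : 2 * |f ω i| * |g ω j| ≤ |f ω i|^2 + |g ω j|^2 := two_mul_le_add_sq _ _
  have : ‖f ω i * g ω j‖ = |f ω i| * |g ω j| := by rw [Real.norm_eq_abs, abs_mul]
  rw [this]
  simp only [Pi.add_apply]
  nlinarith [abs_nonneg (f ω i), abs_nonneg (g ω j), sq_abs (f ω i), sq_abs (g ω j),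
    mul_self_nonneg (f ω i), mul_self_nonneg (g ω j)]

lemma bilin_expand {ι κ : Type*} [Fintype ι] [Fintype κ]
    (f : Ω → ι → ℝ) (g : Ω → κ → ℝ) (u : ι → ℝ) (v : κ → ℝ) (ω : Ω) :
    (f ω ⬝ᵥ u) * (g ω ⬝ᵥ v) = ∑ i, ∑ j, u i * v j * (f ω i * g ω j) := by
  simp only [dotProduct, Finset.sum_mul_sum]
  refine Finset.sum_congr rfl fun i _ => Finset.sum_congr rfl fun j _ => by ring

lemma int_bilin_integrable {ι κ : Type*} [Fintype ι] [Fintype κ]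
    {f : Ω → ι → ℝ} {g : Ω → κ → ℝ}
    (h : ∀ i j, Integrable (fun ω => f ω i * g ω j) μ) (u : ι → ℝ) (v : κ → ℝ) :
    Integrable (fun ω => (f ω ⬝ᵥ u) * (g ω ⬝ᵥ v)) μ := by
  have : (fun ω => (f ω ⬝ᵥ u) * (g ω ⬝ᵥ v))
      = fun ω => ∑ i, ∑ j, u i * v j * (f ω i * g ω j) := by
    funext ω; exact bilin_expand f g u v ω
  rw [this]
  exact integrable_finset_sum _ fun i _ => integrable_finset_sum _ fun j _ =>
    ((h i j).const_mul _)

lemma int_bilin {ι κ : Type*} [Fintype ι] [Fintype κ]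
    {f : Ω → ι → ℝ} {g : Ω → κ → ℝ}
    (h : ∀ i j, Integrable (fun ω => f ω i * g ω j) μ) (u : ι → ℝ) (v : κ → ℝ) :
    ∫ ω, (f ω ⬝ᵥ u) * (g ω ⬝ᵥ v) ∂μ
      = u ⬝ᵥ (Matrix.of fun i j => ∫ ω, f ω i * g ω j ∂μ) *ᵥ v := by
  simp_rw [bilin_expand f g u v]
  rw [integral_finset_sum _ (fun i _ => integrable_finset_sum _ fun j _ => (h i j).const_mul _)]
  simp_rw [integral_finset_sum _ (fun j _ => (h _ j).const_mul _), integral_const_mul]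
  simp only [dotProduct, Matrix.mulVec, Matrix.of_apply, Finset.mul_sum]
  refine Finset.sum_congr rfl fun i _ => Finset.sum_congr rfl fun j _ => by ring

/-- Cauchy–Schwarz for integrals. -/
lemma integral_cs {f g : Ω → ℝ} (hf2 : Integrable (fun ω => f ω * f ω) μ)
    (hg2 : Integrable (fun ω => g ω * g ω) μ) (hfg : Integrable (fun ω => f ω * g ω) μ) :
    (∫ ω, f ω * g ω ∂μ)^2 ≤ (∫ ω, f ω * f ω ∂μ) * (∫ ω, g ω * g ω ∂μ) := by
  set A := ∫ ω, f ω * f ω ∂μ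
  set B := ∫ ω, f ω * g ω ∂μ
  set C := ∫ ω, g ω * g ω ∂μ
  have key : ∀ t : ℝ, 0 ≤ C * (t * t) + (2 * B) * t + A := by
    intro t
    have expand : ∀ ω, (f ω + t * g ω) * (f ω + t * g ω)
        = (g ω * g ω) * (t * t) + (2 * (f ω * g ω)) * t + f ω * f ω := fun ω => by ring
    have hint : Integrable (fun ω => (f ω + t * g ω) * (f ω + t * g ω)) μ := by
      simp_rw [expand]
      exact ((hg2.mul_const _).add ((hfg.const_mul 2).mul_const t)).add hf2
    have h0 : 0 ≤ ∫ ω, (f ω + t * g ω) * (f ω + t * g ω) ∂μ :=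
      integral_nonneg fun ω => mul_self_nonneg _
    have i1 : Integrable (fun ω => g ω * g ω * (t * t)) μ := hg2.mul_const _
    have i2 : Integrable (fun ω => 2 * (f ω * g ω) * t) μ := (hfg.const_mul 2).mul_const t
    have i12 : Integrable (fun ω => g ω * g ω * (t * t) + 2 * (f ω * g ω) * t) μ := i1.add i2
    calc (0:ℝ) ≤ ∫ ω, (f ω + t * g ω) * (f ω + t * g ω) ∂μ := h0
    _ = C * (t * t) + (2 * B) * t + A := by
        simp_rw [expand]
        rw [integral_add i12 hf2, integral_add i1 i2,
          integral_mul_const, integral_mul_const, integral_const_mul]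
  have hd := discrim_le_zero key
  rw [discrim] at hd
  nlinarith [hd]


lemma stationary_aux (a b cw nw lam : ℝ)
    (H : ∀ t : ℝ, 0 < 1 + 2*t*b + t^2*cw → 2*t*(a - lam*b) ≤ t^2*(lam*cw - nw)) :
    a = lam * b := by
  by_contra hne
  have hd : a - lam * b ≠ 0 := sub_ne_zero.mpr hne
  set d := a - lam * b with hddef
  clear_value d
  have hε : 0 < |d| := abs_pos.mpr hd
  set c0 := lam * cw - nw with hc0def
  clear_value c0
  set δ : ℝ := (2*|b| + |cw| + 1)⁻¹ with hδdef
  have hδpos : 0 < δ := by rw [hδdef]; positivity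
  have hδ1 : δ * (2*|b| + |cw|) < 1 := by
    rw [hδdef, inv_mul_eq_div, div_lt_one (by positivity)]
    linarith
  have hδle1 : δ ≤ 1 := by
    rw [hδdef]
    exact inv_le_one_of_one_le₀ (by linarith [abs_nonneg b, abs_nonneg cw])
  clear_value δ
  set τ := min δ (|d|/(|c0|+1)) with hτdef
  have hτpos : 0 < τ := lt_min hδpos (by positivity)
  have hτδ : τ ≤ δ := min_le_left _ _
  have hτc : τ * (|c0| + 1) ≤ |d| := by
    have h6 := min_le_right δ (|d|/(|c0|+1))
    calc τ * (|c0|+1) ≤ (|d|/(|c0|+1)) * (|c0|+1) :=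
          mul_le_mul_of_nonneg_right h6 (by positivity)
    _ = |d| := div_mul_cancel₀ _ (by positivity)
  clear_value τ
  set t : ℝ := (|d|/d) * τ with htdef
  clear_value t
  have hsq : (|d|/d)^2 = 1 := by
    rw [div_pow, sq_abs, div_self (pow_ne_zero 2 hd)]
  have ht2 : t^2 = τ^2 := by rw [htdef, mul_pow, hsq, one_mul]
  have htd : t * d = τ * |d| := by
    rw [htdef]
    field_simp
    try ring
  have habs_t : |t| = τ := by
    rw [htdef, abs_mul, abs_div, abs_abs, div_self (abs_ne_zero.mpr hd), one_mul,
      abs_of_pos hτpos]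
  have hτ1 : τ ≤ 1 := le_trans hτδ hδle1
  have hposq : 0 < 1 + 2*t*b + t^2*cw := by
    have k1 : -(2*τ*|b|) ≤ 2*t*b := by
      have h1 := neg_abs_le (2*t*b)
      have h2 : |2*t*b| = 2*τ*|b| := by
        rw [abs_mul, abs_mul, abs_two, habs_t]
      rw [h2] at h1
      exact h1
    have k2 : -(τ*|cw|) ≤ t^2*cw := by
      have h1 := neg_abs_le (t^2*cw)
      have h2 : |t^2*cw| = τ^2*|cw| := by
        rw [abs_mul, abs_of_nonneg (sq_nonneg t), ht2]
      have h3 : τ^2*|cw| ≤ τ*|cw| := by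
        nlinarith [mul_nonneg (mul_nonneg (sub_nonneg.mpr hτ1) hτpos.le) (abs_nonneg cw)]
      rw [h2] at h1
      linarith
    have k3 : τ*(2*|b| + |cw|) ≤ δ*(2*|b| + |cw|) :=
      mul_le_mul_of_nonneg_right hτδ (by positivity)
    nlinarith [k1, k2, k3, hδ1]
  have hmain := H t hposq
  have h1 : t^2*c0 ≤ τ^2*|c0| := by
    rw [ht2]
    exact mul_le_mul_of_nonneg_left (le_abs_self c0) (sq_nonneg τ)
  have h2 : τ^2*|c0| ≤ τ*|d| - τ^2 := by nlinarith [hτc, hτpos]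
  have h3 : 2*(τ*|d|) ≤ t^2*c0 := by
    calc 2*(τ*|d|) = 2*(t*d) := by rw [htd]
    _ ≤ t^2*c0 := by linarith [hmain]
  have h4 : 0 < τ*|d| := mul_pos hτpos hε
  nlinarith [h1, h2, h3, h4, sq_nonneg τ, hτpos]

set_option maxHeartbeats 1000000 in
theorem matrix_main {ι κ : Type*} [Fintype ι] [Fintype κ]
    (A : Matrix ι ι ℝ) (C : Matrix κ κ ℝ) (Bm : Matrix ι κ ℝ)
    (Ap : Matrix ι ι ℝ) (Cp : Matrix κ κ ℝ)
    (hA : Aᵀ = A) (hC : Cᵀ = C)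
    (hAp : IsMoorePenrose A Ap) (hCp : IsMoorePenrose C Cp)
    (hqY : ∀ u, 0 ≤ u ⬝ᵥ A *ᵥ u) (hqZ : ∀ v, 0 ≤ v ⬝ᵥ C *ᵥ v)
    (csyy : ∀ u u', (u ⬝ᵥ A *ᵥ u')^2 ≤ (u ⬝ᵥ A *ᵥ u) * (u' ⬝ᵥ A *ᵥ u'))
    (cszz : ∀ v v', (v ⬝ᵥ C *ᵥ v')^2 ≤ (v ⬝ᵥ C *ᵥ v) * (v' ⬝ᵥ C *ᵥ v'))
    (csyz : ∀ u v, (u ⬝ᵥ Bm *ᵥ v)^2 ≤ (u ⬝ᵥ A *ᵥ u) * (v ⬝ᵥ C *ᵥ v)) :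
    (sSup {t : ℝ | ∃ u v, 0 < u ⬝ᵥ A *ᵥ u ∧ 0 < v ⬝ᵥ C *ᵥ v ∧
        t = (u ⬝ᵥ Bm *ᵥ v) / Real.sqrt ((u ⬝ᵥ A *ᵥ u) * (v ⬝ᵥ C *ᵥ v))})^2
      = sSup {t : ℝ | ∃ v : κ → ℝ, v ≠ 0 ∧ (Cp * Bmᵀ * Ap * Bm) *ᵥ v = t • v} := by
  classical
  obtain ⟨hA1, hA2, hA3, hA4⟩ := hAp
  obtain ⟨hC1, hC2, hC3, hC4⟩ := hCp
  have hApT : Apᵀ = Ap := mp_symm hA ⟨hA1, hA2, hA3, hA4⟩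
  have hCpT : Cpᵀ = Cp := mp_symm hC ⟨hC1, hC2, hC3, hC4⟩
  have hsymC : ∀ x y, x ⬝ᵥ C *ᵥ y = y ⬝ᵥ C *ᵥ x := by
    intro x y
    rw [dotProduct_comm, dot_shift, hC]
  -- range conditions
  have hPB : A * Ap * Bm = Bm := by
    have h : ∀ u v, u ⬝ᵥ (Bm - A * Ap * Bm) *ᵥ v = 0 := by
      intro u v
      have hw' : u - (A * Ap) *ᵥ u = (1 - A * Ap) *ᵥ u := by
        rw [Matrix.sub_mulVec, Matrix.one_mulVec]
      set w : ι → ℝ := u - (A * Ap) *ᵥ u with hwdef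
      have hT : (1 - A * Ap)ᵀ = 1 - A * Ap := by
        rw [Matrix.transpose_sub, Matrix.transpose_one, hA3]
      have hqYw : w ⬝ᵥ A *ᵥ w = 0 := by
        calc w ⬝ᵥ A *ᵥ w = ((1 - A * Ap) *ᵥ u) ⬝ᵥ (A *ᵥ w) := by rw [← hw']
        _ = u ⬝ᵥ ((1 - A * Ap)ᵀ *ᵥ (A *ᵥ w)) := dot_shift _ _ _
        _ = u ⬝ᵥ (((1 - A * Ap) * A) *ᵥ w) := by rw [hT, Matrix.mulVec_mulVec]
        _ = 0 := by
            rw [Matrix.sub_mul, Matrix.one_mul, hA1, sub_self, Matrix.zero_mulVec,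
              dotProduct_zero]
      have hcs := csyz w v
      rw [hqYw, zero_mul] at hcs
      have hwB : w ⬝ᵥ Bm *ᵥ v = 0 := by
        have := le_antisymm hcs (sq_nonneg _)
        exact pow_eq_zero_iff two_ne_zero |>.mp this
      calc u ⬝ᵥ (Bm - A * Ap * Bm) *ᵥ v
          = u ⬝ᵥ (Bm *ᵥ v) - u ⬝ᵥ ((A * Ap) *ᵥ (Bm *ᵥ v)) := by
            rw [Matrix.sub_mulVec, dotProduct_sub, Matrix.mulVec_mulVec,
              Matrix.mul_assoc]
      _ = w ⬝ᵥ (Bm *ᵥ v) := by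
            rw [hwdef, sub_dotProduct, dot_shift, hA3]
      _ = 0 := hwB
    have h0 := forms_zero _ h
    have := sub_eq_zero.mp h0
    exact this.symm
  have hBQ : Bm * (C * Cp) = Bm := by
    have h : ∀ u v, u ⬝ᵥ (Bm - Bm * (C * Cp)) *ᵥ v = 0 := by
      intro u v
      have hw' : v - (C * Cp) *ᵥ v = (1 - C * Cp) *ᵥ v := by
        rw [Matrix.sub_mulVec, Matrix.one_mulVec]
      set w : κ → ℝ := v - (C * Cp) *ᵥ v with hwdef
      have hT : (1 - C * Cp)ᵀ = 1 - C * Cp := by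
        rw [Matrix.transpose_sub, Matrix.transpose_one, hC3]
      have hqZw : w ⬝ᵥ C *ᵥ w = 0 := by
        calc w ⬝ᵥ C *ᵥ w = ((1 - C * Cp) *ᵥ v) ⬝ᵥ (C *ᵥ w) := by rw [← hw']
        _ = v ⬝ᵥ ((1 - C * Cp)ᵀ *ᵥ (C *ᵥ w)) := dot_shift _ _ _
        _ = v ⬝ᵥ (((1 - C * Cp) * C) *ᵥ w) := by rw [hT, Matrix.mulVec_mulVec]
        _ = 0 := by
            rw [Matrix.sub_mul, Matrix.one_mul, hC1, sub_self, Matrix.zero_mulVec,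
              dotProduct_zero]
      have hcs := csyz u w
      rw [hqZw, mul_zero] at hcs
      have hwB : u ⬝ᵥ Bm *ᵥ w = 0 := by
        have := le_antisymm hcs (sq_nonneg _)
        exact pow_eq_zero_iff two_ne_zero |>.mp this
      calc u ⬝ᵥ (Bm - Bm * (C * Cp)) *ᵥ v
          = u ⬝ᵥ (Bm *ᵥ v) - u ⬝ᵥ (Bm *ᵥ ((C * Cp) *ᵥ v)) := by
            rw [Matrix.sub_mulVec, dotProduct_sub, Matrix.mulVec_mulVec]
      _ = u ⬝ᵥ (Bm *ᵥ w) := by rw [hwdef, Matrix.mulVec_sub, dotProduct_sub]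
      _ = 0 := hwB
    have h0 := forms_zero _ h
    have := sub_eq_zero.mp h0
    exact this.symm
  have hQB : C * Cp * Bmᵀ = Bmᵀ := by
    have := congrArg Matrix.transpose hBQ
    rwa [Matrix.transpose_mul, hC3] at this
  have hCpCC : Cp * C * C = C := by
    calc Cp * C * C = (Cp * C)ᵀ * C := by rw [hC4]
    _ = Cᵀ * Cpᵀ * C := by rw [Matrix.transpose_mul]
    _ = C * (Cp * C) := by rw [hC, hCpT, Matrix.mul_assoc]
    _ = C := by rw [← Matrix.mul_assoc, hC1]
  have hCCCp : C * (C * Cp) = C := by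
    have h' : (C * (C * Cp))ᵀ = C := by
      rw [Matrix.transpose_mul, hC3, hC, hC1]
    calc C * (C * Cp) = ((C * (C * Cp))ᵀ)ᵀ := (Matrix.transpose_transpose _).symm
    _ = Cᵀ := by rw [h']
    _ = C := hC
  -- the matrix N and its properties
  set N : Matrix κ κ ℝ := Bmᵀ * Ap * Bm with hNdef
  have hNsym : Nᵀ = N := by
    rw [hNdef, Matrix.transpose_mul, Matrix.transpose_mul, Matrix.transpose_transpose, hApT,
      Matrix.mul_assoc]
  have hsymN : ∀ x y, x ⬝ᵥ N *ᵥ y = y ⬝ᵥ N *ᵥ x := by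
    intro x y
    rw [dotProduct_comm, dot_shift, hNsym]
  have hM : Cp * Bmᵀ * Ap * Bm = Cp * N := by
    rw [hNdef, Matrix.mul_assoc, Matrix.mul_assoc, Matrix.mul_assoc]
  have hCMm : C * (Cp * N) = N := by
    have e : C * (Cp * N) = C * Cp * Bmᵀ * Ap * Bm := by
      rw [hNdef]; simp only [Matrix.mul_assoc]
    rw [e, hQB]
  have hPB' : A * (Ap * Bm) = Bm := by rw [← Matrix.mul_assoc, hPB]
  have hNv : ∀ v, v ⬝ᵥ N *ᵥ v = (Ap *ᵥ (Bm *ᵥ v)) ⬝ᵥ A *ᵥ (Ap *ᵥ (Bm *ᵥ v)) := by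
    intro v
    have hmat : (Ap * Bm)ᵀ * (A * (Ap * Bm)) = N := by
      rw [hPB', Matrix.transpose_mul, hApT, hNdef]
    calc v ⬝ᵥ N *ᵥ v = v ⬝ᵥ ((Ap * Bm)ᵀ *ᵥ ((A * (Ap * Bm)) *ᵥ v)) := by
          rw [Matrix.mulVec_mulVec, hmat]
    _ = ((Ap * Bm) *ᵥ v) ⬝ᵥ ((A * (Ap * Bm)) *ᵥ v) := (dot_shift _ _ _).symm
    _ = (Ap *ᵥ (Bm *ᵥ v)) ⬝ᵥ A *ᵥ (Ap *ᵥ (Bm *ᵥ v)) := by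
          simp only [Matrix.mulVec_mulVec]
  have hNnn : ∀ v, 0 ≤ v ⬝ᵥ N *ᵥ v := by
    intro v; rw [hNv]; exact hqY _
  have hucross : ∀ v, (Ap *ᵥ (Bm *ᵥ v)) ⬝ᵥ Bm *ᵥ v = v ⬝ᵥ N *ᵥ v := by
    intro v
    have hmat2 : (Ap * Bm)ᵀ * Bm = N := by
      rw [Matrix.transpose_mul, hApT, hNdef, Matrix.mul_assoc]
    calc (Ap *ᵥ (Bm *ᵥ v)) ⬝ᵥ Bm *ᵥ v = ((Ap * Bm) *ᵥ v) ⬝ᵥ (Bm *ᵥ v) := by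
          simp only [Matrix.mulVec_mulVec]
    _ = v ⬝ᵥ ((Ap * Bm)ᵀ *ᵥ (Bm *ᵥ v)) := dot_shift _ _ _
    _ = v ⬝ᵥ N *ᵥ v := by rw [Matrix.mulVec_mulVec, hmat2]
  have hBeta : ∀ u v, u ⬝ᵥ Bm *ᵥ v = u ⬝ᵥ A *ᵥ (Ap *ᵥ (Bm *ᵥ v)) := by
    intro u v
    rw [Matrix.mulVec_mulVec, Matrix.mulVec_mulVec, hPB]
  have hqZzero : ∀ v, v ⬝ᵥ C *ᵥ v = 0 → C *ᵥ v = 0 := by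
    intro v h
    funext i
    have hcs := cszz (Pi.single i 1) v
    rw [h, mul_zero] at hcs
    have := pow_eq_zero_iff two_ne_zero |>.mp (le_antisymm hcs (sq_nonneg _))
    rw [single_dotProduct, one_mul] at this
    exact this
  have hBzero : ∀ v, v ⬝ᵥ C *ᵥ v = 0 → Bm *ᵥ v = 0 := by
    intro v h
    funext i
    have hcs := csyz (Pi.single i 1) v
    rw [h, mul_zero] at hcs
    have := pow_eq_zero_iff two_ne_zero |>.mp (le_antisymm hcs (sq_nonneg _))
    rw [single_dotProduct, one_mul] at this
    exact this
  -- sets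
  set S : Set ℝ := {t : ℝ | ∃ u v, 0 < u ⬝ᵥ A *ᵥ u ∧ 0 < v ⬝ᵥ C *ᵥ v ∧
      t = (u ⬝ᵥ Bm *ᵥ v) / Real.sqrt ((u ⬝ᵥ A *ᵥ u) * (v ⬝ᵥ C *ᵥ v))} with hSdef
  set E : Set ℝ := {t : ℝ | ∃ v : κ → ℝ, v ≠ 0 ∧ (Cp * Bmᵀ * Ap * Bm) *ᵥ v = t • v}
    with hEdef
  have hSabs : ∀ s ∈ S, |s| ≤ 1 := by
    rintro s ⟨u, v, hu, hv, rfl⟩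
    have hD : 0 < (u ⬝ᵥ A *ᵥ u) * (v ⬝ᵥ C *ᵥ v) := mul_pos hu hv
    rw [abs_div, abs_of_nonneg (Real.sqrt_nonneg _)]
    rw [div_le_one (Real.sqrt_pos.mpr hD)]
    exact Real.abs_le_sqrt (csyz u v)
  have hSbdd : BddAbove S := ⟨1, fun s hs => le_trans (le_abs_self s) (hSabs s hs)⟩
  have hSneg : ∀ s ∈ S, -s ∈ S := by
    rintro s ⟨u, v, hu, hv, rfl⟩
    refine ⟨-u, v, ?_, hv, ?_⟩
    · rwa [neg_dotProduct, Matrix.mulVec_neg, dotProduct_neg, neg_neg]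
    · simp only [neg_dotProduct, Matrix.mulVec_neg, dotProduct_neg, neg_neg,
        neg_div]
  -- Direction 1: each element of E is at most (sSup S)^2
  have hE1 : ∀ t ∈ E, 0 ≤ t ∧ t ≤ (sSup S)^2 := by
    rintro t ⟨v, hv0, hveq⟩
    by_cases h0 : v ⬝ᵥ C *ᵥ v = 0
    · have hB0 : Bm *ᵥ v = 0 := hBzero v h0
      have hz : t • v = 0 := by
        rw [← hveq, ← Matrix.mulVec_mulVec, hB0, Matrix.mulVec_zero]
      rcases smul_eq_zero.mp hz with h | h
      · subst h
        exact ⟨le_refl 0, sq_nonneg _⟩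
      · exact absurd h hv0
    · have hqZv : 0 < v ⬝ᵥ C *ᵥ v := lt_of_le_of_ne (hqZ v) (Ne.symm h0)
      have hNvv : N *ᵥ v = t • (C *ᵥ v) := by
        calc N *ᵥ v = (C * (Cp * N)) *ᵥ v := by rw [hCMm]
        _ = C *ᵥ ((Cp * N) *ᵥ v) := (Matrix.mulVec_mulVec _ _ _).symm
        _ = C *ᵥ (t • v) := by rw [← hM, hveq]
        _ = t • (C *ᵥ v) := Matrix.mulVec_smul _ _ _
      have hteq : v ⬝ᵥ N *ᵥ v = t * (v ⬝ᵥ C *ᵥ v) := by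
        rw [hNvv, dotProduct_smul, smul_eq_mul]
      have ht0 : 0 ≤ t := by
        have h1 := hNnn v
        rw [hteq] at h1
        nlinarith
      refine ⟨ht0, ?_⟩
      by_cases hN0 : v ⬝ᵥ N *ᵥ v = 0
      · have : t = 0 := by
          rw [hN0] at hteq
          rcases mul_eq_zero.mp hteq.symm with h | h
          · exact h
          · exact absurd h h0
        rw [this]; exact sq_nonneg _
      · have hNpos : 0 < v ⬝ᵥ N *ᵥ v := lt_of_le_of_ne (hNnn v) (Ne.symm hN0)
        set u : ι → ℝ := Ap *ᵥ (Bm *ᵥ v) with hudef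
        have hqYu : u ⬝ᵥ A *ᵥ u = v ⬝ᵥ N *ᵥ v := (hNv v).symm
        have hβ : u ⬝ᵥ Bm *ᵥ v = v ⬝ᵥ N *ᵥ v := hucross v
        set s : ℝ := (u ⬝ᵥ Bm *ᵥ v) / Real.sqrt ((u ⬝ᵥ A *ᵥ u) * (v ⬝ᵥ C *ᵥ v)) with hsdef
        have hsS : s ∈ S := ⟨u, v, by rw [hqYu]; exact hNpos, hqZv, rfl⟩
        have hs0 : 0 ≤ s := div_nonneg (by rw [hβ]; exact hNpos.le) (Real.sqrt_nonneg _)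
        have hs2 : s^2 = t := by
          have hqYupos : 0 < u ⬝ᵥ A *ᵥ u := by rw [hqYu]; exact hNpos
          rw [hsdef, div_pow, Real.sq_sqrt (mul_pos hqYupos hqZv).le, hβ, hqYu]
          rw [pow_two, mul_div_mul_left _ _ (ne_of_gt hNpos)]
          rw [div_eq_iff (ne_of_gt hqZv), hteq]
        have hsle : s ≤ sSup S := le_csSup hSbdd hsS
        calc t = s^2 := hs2.symm
        _ ≤ (sSup S)^2 := pow_le_pow_left₀ hs0 hsle 2
  have dir1 : sSup E ≤ (sSup S)^2 := Real.sSup_le (fun t ht => (hE1 t ht).2) (sq_nonneg _)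
  have hEbdd : BddAbove E := ⟨(sSup S)^2, fun t ht => (hE1 t ht).2⟩
  -- Direction 2
  have dir2 : (sSup S)^2 ≤ sSup E := by
    by_cases hSne : S.Nonempty
    · obtain ⟨s₀, hs₀S⟩ := hSne
      obtain ⟨u₀, v₀, hu₀, hv₀, hs₀eq⟩ := hs₀S
      have hs₀S' : s₀ ∈ S := ⟨u₀, v₀, hu₀, hv₀, hs₀eq⟩
      have hσ0 : 0 ≤ sSup S := by
        have h1 := le_csSup hSbdd hs₀S'
        have h2 := le_csSup hSbdd (hSneg _ hs₀S')
        linarith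
      -- invariance under the projection C * Cp
      have hQN : (C * Cp) * N = N := by
        have e : (C * Cp) * N = C * Cp * Bmᵀ * Ap * Bm := by
          rw [hNdef]; simp only [Matrix.mul_assoc]
        rw [e, hQB]
      have hNQ : N * (C * Cp) = N := by
        have h' := congrArg Matrix.transpose hQN
        rwa [Matrix.transpose_mul, hNsym, hC3] at h'
      have hqZQ : ∀ v, ((C * Cp) *ᵥ v) ⬝ᵥ C *ᵥ ((C * Cp) *ᵥ v) = v ⬝ᵥ C *ᵥ v := by
        intro v
        have hmat : (C * Cp)ᵀ * (C * (C * Cp)) = C := by rw [hC3, hCCCp, hC1]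
        calc ((C * Cp) *ᵥ v) ⬝ᵥ C *ᵥ ((C * Cp) *ᵥ v)
            = v ⬝ᵥ ((C * Cp)ᵀ *ᵥ (C *ᵥ ((C * Cp) *ᵥ v))) := dot_shift _ _ _
        _ = v ⬝ᵥ C *ᵥ v := by
            simp only [Matrix.mulVec_mulVec]
            rw [hmat]
      have hqNQ : ∀ v, ((C * Cp) *ᵥ v) ⬝ᵥ N *ᵥ ((C * Cp) *ᵥ v) = v ⬝ᵥ N *ᵥ v := by
        intro v
        have hmat : (C * Cp)ᵀ * (N * (C * Cp)) = N := by rw [hC3, hNQ, hQN]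
        calc ((C * Cp) *ᵥ v) ⬝ᵥ N *ᵥ ((C * Cp) *ᵥ v)
            = v ⬝ᵥ ((C * Cp)ᵀ *ᵥ (N *ᵥ ((C * Cp) *ᵥ v))) := dot_shift _ _ _
        _ = v ⬝ᵥ N *ᵥ v := by
            simp only [Matrix.mulVec_mulVec]
            rw [hmat]
      have hscaleC : ∀ (c : ℝ) (w : κ → ℝ) (M : Matrix κ κ ℝ),
          (c • w) ⬝ᵥ M *ᵥ (c • w) = c^2 * (w ⬝ᵥ M *ᵥ w) := by
        intro c w M
        simp only [Matrix.mulVec_smul, smul_dotProduct, dotProduct_smul,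
          smul_eq_mul]
        ring
      have hKmem : ∀ v : κ → ℝ, 0 < v ⬝ᵥ C *ᵥ v →
          ∃ k : κ → ℝ, (∃ w, C *ᵥ w = k) ∧ k ⬝ᵥ C *ᵥ k = 1 ∧
            k ⬝ᵥ N *ᵥ k = (v ⬝ᵥ N *ᵥ v) / (v ⬝ᵥ C *ᵥ v) := by
        intro v hv
        refine ⟨(Real.sqrt (v ⬝ᵥ C *ᵥ v))⁻¹ • ((C * Cp) *ᵥ v),
          ⟨(Real.sqrt (v ⬝ᵥ C *ᵥ v))⁻¹ • (Cp *ᵥ v), ?_⟩, ?_, ?_⟩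
        · rw [Matrix.mulVec_smul, Matrix.mulVec_mulVec]
        · rw [hscaleC, hqZQ, inv_pow, Real.sq_sqrt hv.le, inv_mul_cancel₀ (ne_of_gt hv)]
        · rw [hscaleC, hqNQ, inv_pow, Real.sq_sqrt hv.le, inv_mul_eq_div]
      -- the compact set K
      have hqfc : ∀ (M : Matrix κ κ ℝ), Continuous fun v : κ → ℝ => v ⬝ᵥ M *ᵥ v := by
        intro M
        unfold dotProduct Matrix.mulVec
        exact continuous_finset_sum _ fun i _ => (continuous_apply i).mul
          (continuous_finset_sum _ fun j _ => continuous_const.mul (continuous_apply j))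
      have hrange : {k : κ → ℝ | ∃ w, C *ᵥ w = k}
          = ((LinearMap.range (Matrix.mulVecLin C) : Submodule ℝ (κ → ℝ)) : Set (κ → ℝ)) := by
        ext x
        simp [LinearMap.mem_range, Matrix.mulVecLin_apply]
      have hrclosed : IsClosed {k : κ → ℝ | ∃ w, C *ᵥ w = k} := by
        rw [hrange]; exact Submodule.closed_of_finiteDimensional _
      set K : Set (κ → ℝ) := {k | (∃ w, C *ᵥ w = k) ∧ k ⬝ᵥ C *ᵥ k = 1} with hKdef
      have hKclosed : IsClosed K := by
        have e : K = {k : κ → ℝ | ∃ w, C *ᵥ w = k} ∩ {k | k ⬝ᵥ C *ᵥ k = 1} := rfl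
        rw [e]
        exact hrclosed.inter (isClosed_eq (hqfc C) continuous_const)
      have hRzero : ∀ k : κ → ℝ, (∃ w, C *ᵥ w = k) → k ⬝ᵥ C *ᵥ k = 0 → k = 0 := by
        rintro k ⟨w, rfl⟩ h
        have hCk : C *ᵥ (C *ᵥ w) = 0 := hqZzero _ h
        have h2 : (C *ᵥ w) ⬝ᵥ (C *ᵥ w) = 0 := by
          rw [dot_shift, hC, hCk, dotProduct_zero]
        exact dotProduct_self_eq_zero.mp h2
      set Sp : Set (κ → ℝ) := {k | (∃ w, C *ᵥ w = k) ∧ ‖k‖ = 1} with hSpdef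
      have hSpclosed : IsClosed Sp :=
        hrclosed.inter (isClosed_eq continuous_norm continuous_const)
      have hSpcompact : IsCompact Sp := by
        refine IsCompact.of_isClosed_subset (isCompact_closedBall 0 1) hSpclosed ?_
        intro x hx
        rw [Metric.mem_closedBall, dist_zero_right]
        exact le_of_eq hx.2
      obtain ⟨k₀, hk₀R, hk₀1, _⟩ := hKmem v₀ hv₀
      have hk₀K : k₀ ∈ K := ⟨hk₀R, hk₀1⟩
      have hk₀0 : k₀ ≠ 0 := by
        intro h
        rw [h] at hk₀1
        simp at hk₀1
      have hSpne : Sp.Nonempty := by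
        refine ⟨‖k₀‖⁻¹ • k₀, ?_, ?_⟩
        · obtain ⟨w, hw⟩ := hk₀R
          exact ⟨‖k₀‖⁻¹ • w, by rw [Matrix.mulVec_smul, hw]⟩
        · rw [norm_smul, norm_inv, norm_norm, inv_mul_cancel₀ (norm_ne_zero_iff.mpr hk₀0)]
      obtain ⟨vm, hvmSp, hvmmin⟩ := hSpcompact.exists_isMinOn hSpne (hqfc C).continuousOn
      have hm : 0 < vm ⬝ᵥ C *ᵥ vm := by
        rcases lt_or_eq_of_le (hqZ vm) with h | h
        · exact h
        · exfalso
          have h0 : vm = 0 := hRzero vm hvmSp.1 h.symm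
          have h1 := hvmSp.2
          rw [h0, norm_zero] at h1
          exact zero_ne_one h1
      have hKbdd : Bornology.IsBounded K := by
        rw [isBounded_iff_forall_norm_le]
        refine ⟨Real.sqrt (1 / (vm ⬝ᵥ C *ᵥ vm)), ?_⟩
        rintro x ⟨hxR, hx1⟩
        have hx0 : x ≠ 0 := by
          intro h
          rw [h] at hx1
          simp at hx1
        have hxn : (0:ℝ) < ‖x‖ := norm_pos_iff.mpr hx0
        have hxSp : ‖x‖⁻¹ • x ∈ Sp := by
          constructor
          · obtain ⟨w, hw⟩ := hxR
            exact ⟨‖x‖⁻¹ • w, by rw [Matrix.mulVec_smul, hw]⟩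
          · rw [norm_smul, norm_inv, norm_norm, inv_mul_cancel₀ (ne_of_gt hxn)]
        have hmle : vm ⬝ᵥ C *ᵥ vm ≤ (‖x‖⁻¹ • x) ⬝ᵥ C *ᵥ (‖x‖⁻¹ • x) := hvmmin hxSp
        rw [hscaleC, hx1, mul_one, inv_pow] at hmle
        have h2 : (vm ⬝ᵥ C *ᵥ vm) * ‖x‖^2 ≤ 1 := by
          have h3 := mul_le_mul_of_nonneg_right hmle (sq_nonneg ‖x‖)
          rwa [inv_mul_cancel₀ (by positivity : (‖x‖:ℝ)^2 ≠ 0)] at h3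
        apply Real.le_sqrt_of_sq_le
        rw [le_div_iff₀ hm]
        nlinarith [h2]
      have hKcompact : IsCompact K := Metric.isCompact_of_isClosed_isBounded hKclosed hKbdd
      have hKne : K.Nonempty := ⟨k₀, hk₀K⟩
      obtain ⟨vs, hvsK, hvsmax⟩ := hKcompact.exists_isMaxOn hKne (hqfc N).continuousOn
      set lam := vs ⬝ᵥ N *ᵥ vs with hlamdef
      have hlam0 : 0 ≤ lam := hNnn vs
      have hall : ∀ v, 0 < v ⬝ᵥ C *ᵥ v → v ⬝ᵥ N *ᵥ v ≤ lam * (v ⬝ᵥ C *ᵥ v) := by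
        intro v hv
        obtain ⟨k, hkR, hk1, hkN⟩ := hKmem v hv
        have h5 : k ⬝ᵥ N *ᵥ k ≤ lam := hvsmax ⟨hkR, hk1⟩
        rw [hkN, div_le_iff₀ hv] at h5
        linarith [h5]
      have hvs1 : vs ⬝ᵥ C *ᵥ vs = 1 := hvsK.2
      have hexpC : ∀ (t : ℝ) (w : κ → ℝ), (vs + t • w) ⬝ᵥ C *ᵥ (vs + t • w)
          = 1 + 2*t*(w ⬝ᵥ C *ᵥ vs) + t^2*(w ⬝ᵥ C *ᵥ w) := by
        intro t w
        have h2 : vs ⬝ᵥ C *ᵥ w = w ⬝ᵥ C *ᵥ vs := hsymC vs w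
        simp only [Matrix.mulVec_add, Matrix.mulVec_smul, dotProduct_add,
          add_dotProduct, dotProduct_smul, smul_dotProduct, smul_eq_mul]
        linear_combination hvs1 + t * h2
      have hexpN : ∀ (t : ℝ) (w : κ → ℝ), (vs + t • w) ⬝ᵥ N *ᵥ (vs + t • w)
          = lam + 2*t*(w ⬝ᵥ N *ᵥ vs) + t^2*(w ⬝ᵥ N *ᵥ w) := by
        intro t w
        have h2 : vs ⬝ᵥ N *ᵥ w = w ⬝ᵥ N *ᵥ vs := hsymN vs w
        simp only [Matrix.mulVec_add, Matrix.mulVec_smul, dotProduct_add,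
          add_dotProduct, dotProduct_smul, smul_dotProduct, smul_eq_mul]
        linear_combination t * h2 - hlamdef
      have hineq : ∀ (t : ℝ) (w : κ → ℝ), 0 < (vs + t • w) ⬝ᵥ C *ᵥ (vs + t • w) →
          2*t*((w ⬝ᵥ N *ᵥ vs) - lam*(w ⬝ᵥ C *ᵥ vs))
            ≤ t^2*(lam*(w ⬝ᵥ C *ᵥ w) - (w ⬝ᵥ N *ᵥ w)) := by
        intro t w hpos
        have h := hall _ hpos
        rw [hexpC, hexpN] at h
        nlinarith [h]
      have hstat' : ∀ w, w ⬝ᵥ N *ᵥ vs = lam * (w ⬝ᵥ C *ᵥ vs) := by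
        intro w
        refine stationary_aux (w ⬝ᵥ N *ᵥ vs) (w ⬝ᵥ C *ᵥ vs) (w ⬝ᵥ C *ᵥ w) (w ⬝ᵥ N *ᵥ w) lam (fun t ht => ?_)
        have hpos : 0 < (vs + t • w) ⬝ᵥ C *ᵥ (vs + t • w) := by rw [hexpC]; exact ht
        exact hineq t w hpos
      have hstat : N *ᵥ vs = lam • (C *ᵥ vs) := by
        funext i
        have h7 := hstat' (Pi.single i 1)
        rw [single_dotProduct, single_dotProduct, one_mul, one_mul] at h7
        simpa [Pi.smul_apply, smul_eq_mul] using h7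
      have hvs0 : vs ≠ 0 := by
        intro h
        have h1 := hvs1
        rw [h] at h1
        simp at h1
      have hQ'vs : (Cp * C) *ᵥ vs = vs := by
        obtain ⟨h, hh⟩ := hvsK.1
        rw [← hh, Matrix.mulVec_mulVec]
        have e : Cp * C * C = C := hCpCC
        rw [e]
      have hlamE : lam ∈ E := by
        refine ⟨vs, hvs0, ?_⟩
        calc (Cp * Bmᵀ * Ap * Bm) *ᵥ vs = (Cp * N) *ᵥ vs := by rw [hM]
        _ = Cp *ᵥ (N *ᵥ vs) := (Matrix.mulVec_mulVec _ _ _).symm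
        _ = Cp *ᵥ (lam • (C *ᵥ vs)) := by rw [hstat]
        _ = lam • (Cp *ᵥ (C *ᵥ vs)) := Matrix.mulVec_smul _ _ _
        _ = lam • ((Cp * C) *ᵥ vs) := by rw [Matrix.mulVec_mulVec]
        _ = lam • vs := by rw [hQ'vs]
      have hEsup0 : lam ≤ sSup E := le_csSup hEbdd hlamE
      have hkey : ∀ s ∈ S, s^2 ≤ lam := by
        rintro s ⟨u, v, hu, hv, rfl⟩
        have hD : 0 < (u ⬝ᵥ A *ᵥ u) * (v ⬝ᵥ C *ᵥ v) := mul_pos hu hv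
        rw [div_pow, Real.sq_sqrt hD.le, div_le_iff₀ hD]
        have hb2 : (u ⬝ᵥ Bm *ᵥ v)^2 ≤ (u ⬝ᵥ A *ᵥ u) * (v ⬝ᵥ N *ᵥ v) := by
          rw [hBeta u v]
          calc (u ⬝ᵥ A *ᵥ (Ap *ᵥ (Bm *ᵥ v)))^2
              ≤ (u ⬝ᵥ A *ᵥ u) * ((Ap *ᵥ (Bm *ᵥ v)) ⬝ᵥ A *ᵥ (Ap *ᵥ (Bm *ᵥ v))) := csyy _ _
          _ = (u ⬝ᵥ A *ᵥ u) * (v ⬝ᵥ N *ᵥ v) := by rw [← hNv]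
        have hNle : v ⬝ᵥ N *ᵥ v ≤ lam * (v ⬝ᵥ C *ᵥ v) := hall v hv
        calc (u ⬝ᵥ Bm *ᵥ v)^2 ≤ (u ⬝ᵥ A *ᵥ u) * (v ⬝ᵥ N *ᵥ v) := hb2
        _ ≤ (u ⬝ᵥ A *ᵥ u) * (lam * (v ⬝ᵥ C *ᵥ v)) := by nlinarith [hu.le, hNle]
        _ = lam * ((u ⬝ᵥ A *ᵥ u) * (v ⬝ᵥ C *ᵥ v)) := by ring
      have hsupE0 : 0 ≤ sSup E := le_trans hlam0 hEsup0
      have hup : sSup S ≤ Real.sqrt (sSup E) := by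
        apply Real.sSup_le _ (Real.sqrt_nonneg _)
        intro s hs
        calc s ≤ |s| := le_abs_self s
        _ = Real.sqrt (s^2) := (Real.sqrt_sq_eq_abs s).symm
        _ ≤ Real.sqrt (sSup E) := Real.sqrt_le_sqrt (le_trans (hkey s hs) hEsup0)
      calc (sSup S)^2 ≤ (Real.sqrt (sSup E))^2 := pow_le_pow_left₀ hσ0 hup 2
      _ = sSup E := Real.sq_sqrt hsupE0
    · have hS0 : sSup S = 0 := by
        rw [Set.not_nonempty_iff_eq_empty.mp hSne, Real.sSup_empty]
      rw [hS0]
      have h00 : (0:ℝ)^2 = 0 := by norm_num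
      rw [h00]
      by_cases hEne : E.Nonempty
      · obtain ⟨t, ht⟩ := hEne
        exact le_trans (hE1 t ht).1 (le_csSup hEbdd ht)
      · rw [Set.not_nonempty_iff_eq_empty.mp hEne, Real.sSup_empty]
  exact le_antisymm dir2 dir1

end Aux

/-- `ρ(y,z)²` equals the largest eigenvalue of `Σ_zz⁺ Σ_zy Σ_yy⁺ Σ_yz`. -/
theorem stmt_16 {Ω : Type*} [MeasurableSpace Ω] (μ : Measure Ω) [IsProbabilityMeasure μ]
    {ι κ : Type*} [Fintype ι] [Fintype κ]
    (y : Ω → ι → ℝ) (z : Ω → κ → ℝ)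
    (hy : Measurable y) (hz : Measurable z)
    (hyL2 : Integrable (fun ω => y ω ⬝ᵥ y ω) μ)
    (hzL2 : Integrable (fun ω => z ω ⬝ᵥ z ω) μ)
    (Syy : Matrix ι ι ℝ) (hSyy : Syy = Matrix.of fun i j => ∫ ω, y ω i * y ω j ∂μ)
    (Szz : Matrix κ κ ℝ) (hSzz : Szz = Matrix.of fun i j => ∫ ω, z ω i * z ω j ∂μ)
    (Syz : Matrix ι κ ℝ) (hSyz : Syz = Matrix.of fun i j => ∫ ω, y ω i * z ω j ∂μ)
    (Szy : Matrix κ ι ℝ) (hSzy : Szy = Syzᵀ)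
    (Syyp : Matrix ι ι ℝ) (hSyyp : IsMoorePenrose Syy Syyp)
    (Szzp : Matrix κ κ ℝ) (hSzzp : IsMoorePenrose Szz Szzp) :
    canonCorr μ y z ^ 2 =
      sSup {t : ℝ | ∃ v : κ → ℝ, v ≠ 0 ∧ (Szzp * Szy * Syyp * Syz).mulVec v = t • v} := by
  subst hSzy
  have hyy : ∀ i j, Integrable (fun ω => y ω i * y ω j) μ := cross_int hy hy hyL2 hyL2
  have hzz : ∀ i j, Integrable (fun ω => z ω i * z ω j) μ := cross_int hz hz hzL2 hzL2
  have hyz : ∀ i j, Integrable (fun ω => y ω i * z ω j) μ := cross_int hy hz hyL2 hzL2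
  have idyy : ∀ u u' : ι → ℝ, ∫ ω, (y ω ⬝ᵥ u) * (y ω ⬝ᵥ u') ∂μ = u ⬝ᵥ Syy *ᵥ u' := by
    intro u u'
    rw [int_bilin hyy, ← hSyy]
  have idzz : ∀ v v' : κ → ℝ, ∫ ω, (z ω ⬝ᵥ v) * (z ω ⬝ᵥ v') ∂μ = v ⬝ᵥ Szz *ᵥ v' := by
    intro v v'
    rw [int_bilin hzz, ← hSzz]
  have idyz : ∀ (u : ι → ℝ) (v : κ → ℝ),
      ∫ ω, (y ω ⬝ᵥ u) * (z ω ⬝ᵥ v) ∂μ = u ⬝ᵥ Syz *ᵥ v := by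
    intro u v
    rw [int_bilin hyz, ← hSyz]
  have sqY : ∀ u : ι → ℝ, ∫ ω, (y ω ⬝ᵥ u)^2 ∂μ = u ⬝ᵥ Syy *ᵥ u := by
    intro u
    rw [← idyy u u]
    congr 1
    funext ω
    ring
  have sqZ : ∀ v : κ → ℝ, ∫ ω, (z ω ⬝ᵥ v)^2 ∂μ = v ⬝ᵥ Szz *ᵥ v := by
    intro v
    rw [← idzz v v]
    congr 1
    funext ω
    ring
  have hqY : ∀ u, 0 ≤ u ⬝ᵥ Syy *ᵥ u := by
    intro u
    rw [← idyy u u]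
    exact integral_nonneg fun ω => mul_self_nonneg _
  have hqZ : ∀ v, 0 ≤ v ⬝ᵥ Szz *ᵥ v := by
    intro v
    rw [← idzz v v]
    exact integral_nonneg fun ω => mul_self_nonneg _
  have csyy : ∀ u u', (u ⬝ᵥ Syy *ᵥ u')^2 ≤ (u ⬝ᵥ Syy *ᵥ u) * (u' ⬝ᵥ Syy *ᵥ u') := by
    intro u u'
    rw [← idyy u u', ← idyy u u, ← idyy u' u']
    exact integral_cs (int_bilin_integrable hyy u u) (int_bilin_integrable hyy u' u')
      (int_bilin_integrable hyy u u')
  have cszz : ∀ v v', (v ⬝ᵥ Szz *ᵥ v')^2 ≤ (v ⬝ᵥ Szz *ᵥ v) * (v' ⬝ᵥ Szz *ᵥ v') := by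
    intro v v'
    rw [← idzz v v', ← idzz v v, ← idzz v' v']
    exact integral_cs (int_bilin_integrable hzz v v) (int_bilin_integrable hzz v' v')
      (int_bilin_integrable hzz v v')
  have csyz : ∀ (u : ι → ℝ) (v : κ → ℝ),
      (u ⬝ᵥ Syz *ᵥ v)^2 ≤ (u ⬝ᵥ Syy *ᵥ u) * (v ⬝ᵥ Szz *ᵥ v) := by
    intro u v
    rw [← idyz u v, ← idyy u u, ← idzz v v]
    exact integral_cs (int_bilin_integrable hyy u u) (int_bilin_integrable hzz v v)
      (int_bilin_integrable hyz u v)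
  have hAsym : Syyᵀ = Syy := by
    rw [hSyy]
    ext i j
    simp only [Matrix.transpose_apply, Matrix.of_apply]
    simp_rw [mul_comm]
  have hCsym : Szzᵀ = Szz := by
    rw [hSzz]
    ext i j
    simp only [Matrix.transpose_apply, Matrix.of_apply]
    simp_rw [mul_comm]
  have hset : canonCorr μ y z = sSup {t : ℝ | ∃ u v, 0 < u ⬝ᵥ Syy *ᵥ u ∧ 0 < v ⬝ᵥ Szz *ᵥ v ∧
      t = (u ⬝ᵥ Syz *ᵥ v) / Real.sqrt ((u ⬝ᵥ Syy *ᵥ u) * (v ⬝ᵥ Szz *ᵥ v))} := by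
    unfold canonCorr
    congr 1
    ext t
    constructor
    · rintro ⟨u, v, h1, h2, h3⟩
      rw [sqY] at h1
      rw [sqZ] at h2
      rw [sqY, sqZ, idyz] at h3
      exact ⟨u, v, h1, h2, h3⟩
    · rintro ⟨u, v, h1, h2, h3⟩
      refine ⟨u, v, ?_, ?_, ?_⟩
      · rwa [sqY]
      · rwa [sqZ]
      · rwa [sqY, sqZ, idyz]
  rw [hset]
  exact matrix_main Syy Szz Syz Syyp Szzp hAsym hCsym hSyyp hSzzp hqY hqZ csyy cszz csyz
end
end
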